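/- Let G be a simple graph on a nonempty finite vertex set V, and let F and H be flats of G with H ⊆ F. Then the sum, over all ordered set partitions (S_1,…,S_k) of V into nonempty blocks satisfying ⋃_{i=1}^k F|_{S_i} = H, of (-1)^k, equals (-1)^{c(H)} · o(H,F). Here F|_{S_i} = {edges of F with both endpoints in S_i}; c(H) is the number of connected components of the spanning subgraph (V,H); and o(H,F) is the number of acyclic orientations of the contraction graph (V,F)/H, the simple graph whose vertices are the connected components of (V,H), with two distinct components B and C adjacent exactly when some edge of F joins a vertex of B to a vertex of C. -/

import Mathlib

namespace GraphSpecies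

variable {V : Type*}

def IsOrientationOn (G : SimpleGraph V) (S : Set V) (O : V → V → Prop) : Prop :=
  (∀ u v, O u v → u ∈ S ∧ v ∈ S ∧ G.Adj u v) ∧
  (∀ u v, u ∈ S → v ∈ S → G.Adj u v → O u v ∨ O v u) ∧
  (∀ u v, ¬ (O u v ∧ O v u))

def IsAcyclicOrientationOn (G : SimpleGraph V) (S : Set V) (O : V → V → Prop) : Prop :=
  IsOrientationOn G S O ∧ Irreflexive (Relation.TransGen O)

def restrictO (O : V → V → Prop) (A : Set V) : V → V → Prop :=
  fun u v => O u v ∧ u ∈ A ∧ v ∈ A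

def prodO (G : SimpleGraph V) (S T : Set V) (O P : V → V → Prop) : V → V → Prop :=
  fun u v => O u v ∨ P u v ∨ (u ∈ S ∧ v ∈ T ∧ G.Adj u v)

def flipO (O : V → V → Prop) : V → V → Prop := fun u v => O v u

noncomputable def eCount (O : V → V → Prop) (A B : Set V) : ℕ :=
  {p : V × V | O p.1 p.2 ∧ p.1 ∈ A ∧ p.2 ∈ B}.ncard

noncomputable def eCross (G : SimpleGraph V) (A B : Set V) : ℕ :=
  {p : V × V | G.Adj p.1 p.2 ∧ p.1 ∈ A ∧ p.2 ∈ B}.ncard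

def IsComposition [DecidableEq V] (X : Finset V) (C : List (Finset V)) : Prop :=
  (∀ B ∈ C, B.Nonempty) ∧ C.Pairwise Disjoint ∧ C.foldr (· ∪ ·) ∅ = X

def earlier (C : List (Finset V)) (u v : V) : Prop :=
  ∃ i j : Fin C.length, i < j ∧ u ∈ C.get i ∧ v ∈ C.get j

def sameBlock (C : List (Finset V)) (u v : V) : Prop :=
  ∃ i : Fin C.length, u ∈ C.get i ∧ v ∈ C.get i

def restrictC [DecidableEq V] (C : List (Finset V)) (S : Finset V) : List (Finset V) :=
  (C.map (· ∩ S)).filter fun B => B.Nonempty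

def IsStableComposition [DecidableEq V] (G : SimpleGraph V) (S : Finset V)
    (C : List (Finset V)) : Prop :=
  IsComposition S C ∧ ∀ B ∈ C, ∀ u ∈ B, ∀ v ∈ B, ¬ G.Adj u v

def edgeRestrict (F : Set (Sym2 V)) (S : Set V) : Set (Sym2 V) :=
  {e | e ∈ F ∧ ∀ v ∈ e, v ∈ S}

def IsFlatOn (G : SimpleGraph V) (S : Set V) (F : Set (Sym2 V)) : Prop :=
  F ⊆ G.edgeSet ∧ (∀ e ∈ F, ∀ v ∈ e, v ∈ S) ∧
  ∀ u v, u ∈ S → v ∈ S → G.Adj u v →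
    (SimpleGraph.fromEdgeSet F).Reachable u v → s(u, v) ∈ F

def IsLinList (ℓ : List V) : Prop := ℓ.Nodup ∧ ∀ v : V, v ∈ ℓ

def after [DecidableEq V] (ℓ : List V) (u v : V) : Prop :=
  ℓ.idxOf v < ℓ.idxOf u

def linOfComp [DecidableEq V] (ℓ : List V) (C : List (Finset V)) : List V :=
  (C.map fun B => ℓ.filter fun v => v ∈ B).flatten


def contractionGraph (H F : Set (Sym2 V)) :
    SimpleGraph (SimpleGraph.fromEdgeSet H).ConnectedComponent where
  Adj B C := B ≠ C ∧ ∃ u v : V, s(u, v) ∈ F ∧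
      (SimpleGraph.fromEdgeSet H).connectedComponentMk u = B ∧
      (SimpleGraph.fromEdgeSet H).connectedComponentMk v = C
  symm := ⟨by
    rintro B C ⟨hne, u, v, he, hu, hv⟩
    exact ⟨hne.symm, v, u, by rw [Sym2.eq_swap]; exact he, hv, hu⟩⟩
  loopless := ⟨by rintro B ⟨hne, -⟩; exact hne rfl⟩

section Helpers
variable {W : Type*} [DecidableEq W]

lemma mem_foldr_union {C : List (Finset W)} {a : W} :
    a ∈ C.foldr (· ∪ ·) ∅ ↔ ∃ B ∈ C, a ∈ B := by
  induction C with
  | nil => simp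
  | cons B C ih => simp [ih]

lemma length_le_card {C : List (Finset W)} (hne : ∀ B ∈ C, B.Nonempty)
    (hpd : C.Pairwise Disjoint) : C.length ≤ (C.foldr (· ∪ ·) ∅).card := by
  induction C with
  | nil => simp
  | cons B C ih =>
    rw [List.pairwise_cons] at hpd
    have hdisj : Disjoint B (C.foldr (· ∪ ·) ∅) := by
      rw [Finset.disjoint_left]
      intro a haB haU
      obtain ⟨B', hB', ha⟩ := mem_foldr_union.mp haU
      exact (Finset.disjoint_left.mp (hpd.1 B' hB')) haB ha
    have hci := ih (fun B hB => hne B (List.mem_cons_of_mem _ hB)) hpd.2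
    have hBc : 1 ≤ B.card := Finset.card_pos.mpr (hne B (List.mem_cons_self))
    have hcard : (B ∪ C.foldr (· ∪ ·) ∅).card = B.card + (C.foldr (· ∪ ·) ∅).card :=
      Finset.card_union_of_disjoint hdisj
    show C.length + 1 ≤ (B ∪ C.foldr (· ∪ ·) ∅).card
    omega

lemma comps_finite [Fintype W] (X : Finset W) (P : List (Finset W) → Prop) :
    {C : List (Finset W) | IsComposition X C ∧ P C}.Finite := by
  apply Set.Finite.subset (List.finite_length_le (Finset W) X.card)
  rintro C ⟨hC, -⟩
  have h := length_le_card hC.1 hC.2.1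
  rw [hC.2.2] at h
  exact h

lemma idx_unique {C : List (Finset W)} (hpd : C.Pairwise Disjoint) {u : W}
    {i j : Fin C.length} (hi : u ∈ C.get i) (hj : u ∈ C.get j) : i = j := by
  by_contra hne
  rcases lt_or_gt_of_ne hne with h | h
  · exact (Finset.disjoint_left.mp (List.pairwise_iff_get.mp hpd i j h)) hi hj
  · exact (Finset.disjoint_left.mp (List.pairwise_iff_get.mp hpd j i h)) hj hi

def compatSet (R : W → W → Prop) (X : Finset W) : Set (List (Finset W)) :=
  {C | IsComposition X C ∧ ∀ u v, u ∈ X → v ∈ X → R u v → earlier C u v}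

attribute [local instance] Classical.propDecidable

lemma compat_cons_iff {R : W → W → Prop} {X S : Finset W} {C : List (Finset W)} :
    (S :: C) ∈ compatSet R X ↔
      S.Nonempty ∧ S ⊆ X ∧ (∀ v ∈ S, ∀ u ∈ X, ¬ R u v) ∧ C ∈ compatSet R (X \ S) := by
  constructor
  · rintro ⟨⟨hne, hpd, hun⟩, hear⟩
    have hScons : S ⊆ X := fun a ha => by
      rw [← hun]; exact mem_foldr_union.mpr ⟨S, List.mem_cons_self, ha⟩
    have hdisj : ∀ B ∈ C, Disjoint S B := (List.pairwise_cons.mp hpd).1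
    have hfold : C.foldr (· ∪ ·) ∅ = X \ S := by
      ext a
      rw [mem_foldr_union, Finset.mem_sdiff]
      constructor
      · rintro ⟨B, hB, ha⟩
        refine ⟨?_, fun haS => Finset.disjoint_left.mp (hdisj B hB) haS ha⟩
        rw [← hun]; exact mem_foldr_union.mpr ⟨B, List.mem_cons_of_mem _ hB, ha⟩
      · rintro ⟨haX, haS⟩
        rw [← hun] at haX
        rcases mem_foldr_union.mp haX with ⟨B, hB, ha⟩
        rcases List.mem_cons.mp hB with rfl | hB
        · exact absurd ha haS
        · exact ⟨B, hB, ha⟩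
    have hmin : ∀ v ∈ S, ∀ u ∈ X, ¬ R u v := by
      intro v hv u hu hR
      obtain ⟨i, j, hij, hui, hvj⟩ := hear u v hu (hScons hv) hR
      have h0 : v ∈ (S :: C).get ⟨0, Nat.succ_pos _⟩ := hv
      have hj0 := idx_unique hpd hvj h0
      rw [hj0, Fin.lt_def] at hij
      exact absurd hij (Nat.not_lt_zero _)
    refine ⟨hne S (List.mem_cons_self), hScons, hmin,
      ⟨fun B hB => hne B (List.mem_cons_of_mem _ hB), (List.pairwise_cons.mp hpd).2, hfold⟩, ?_⟩
    intro u v hu hv hR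
    have huX : u ∈ X := (Finset.mem_sdiff.mp hu).1
    have hvX : v ∈ X := (Finset.mem_sdiff.mp hv).1
    obtain ⟨⟨iv, hivlt⟩, ⟨jv, hjvlt⟩, hij, hui, hvj⟩ := hear u v huX hvX hR
    rw [Fin.mk_lt_mk] at hij
    match iv, jv with
    | 0, _ => exact absurd (hui : u ∈ S) (Finset.mem_sdiff.mp hu).2
    | _ + 1, 0 => omega
    | i' + 1, j' + 1 =>
      exact ⟨⟨i', Nat.succ_lt_succ_iff.mp hivlt⟩, ⟨j', Nat.succ_lt_succ_iff.mp hjvlt⟩,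
        by rw [Fin.mk_lt_mk]; omega, hui, hvj⟩
  · rintro ⟨hSne, hSX, hminS, ⟨⟨hne, hpd, hun⟩, hear⟩⟩
    have hblk : ∀ B ∈ C, ∀ a ∈ B, a ∈ X \ S := fun B hB a ha => by
      rw [← hun]; exact mem_foldr_union.mpr ⟨B, hB, ha⟩
    refine ⟨⟨?_, ?_, ?_⟩, ?_⟩
    · rintro B hB
      rcases List.mem_cons.mp hB with rfl | hB
      exacts [hSne, hne B hB]
    · rw [List.pairwise_cons]
      refine ⟨fun B hB => Finset.disjoint_left.mpr fun {a} haS haB =>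
        (Finset.mem_sdiff.mp (hblk B hB _ haB)).2 haS, hpd⟩
    · show S ∪ C.foldr (· ∪ ·) ∅ = X
      rw [hun]
      exact Finset.union_sdiff_of_subset hSX
    · intro u v hu hv hR
      have hvS : v ∉ S := fun hvS => hminS v hvS u hu hR
      have hvC : v ∈ C.foldr (· ∪ ·) ∅ := by
        rw [hun]; exact Finset.mem_sdiff.mpr ⟨hv, hvS⟩
      by_cases huS : u ∈ S
      · obtain ⟨B, hB, hvB⟩ := mem_foldr_union.mp hvC
        obtain ⟨j, hjB⟩ := List.mem_iff_get.mp hB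
        refine ⟨⟨0, Nat.succ_pos _⟩, ⟨j.val + 1, Nat.succ_lt_succ j.isLt⟩,
          by rw [Fin.mk_lt_mk]; omega, huS, ?_⟩
        show v ∈ C.get ⟨j.val, j.isLt⟩
        rw [Fin.eta, hjB]
        exact hvB
      · have huC : u ∈ X \ S := Finset.mem_sdiff.mpr ⟨hu, huS⟩
        have hvC' : v ∈ X \ S := Finset.mem_sdiff.mpr ⟨hv, hvS⟩
        obtain ⟨i, j, hij, hui, hvj⟩ := hear u v huC hvC' hR
        exact ⟨⟨i.val + 1, Nat.succ_lt_succ i.isLt⟩, ⟨j.val + 1, Nat.succ_lt_succ j.isLt⟩,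
          by rw [Fin.mk_lt_mk]; exact Nat.succ_lt_succ hij,
          by show u ∈ C.get ⟨i.val, i.isLt⟩; rw [Fin.eta]; exact hui,
          by show v ∈ C.get ⟨j.val, j.isLt⟩; rw [Fin.eta]; exact hvj⟩

lemma compat_empty {R : W → W → Prop} : compatSet R (∅ : Finset W) = {[]} := by
  ext C
  simp only [compatSet, Set.mem_setOf_eq, Set.mem_singleton_iff]
  constructor
  · rintro ⟨⟨hne, hpd, hun⟩, -⟩
    cases C with
    | nil => rfl
    | cons B C =>
      obtain ⟨a, ha⟩ := hne B (List.mem_cons_self)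
      have : a ∈ (∅ : Finset W) := by
        rw [← hun]; exact mem_foldr_union.mpr ⟨B, List.mem_cons_self, ha⟩
      simp at this
  · rintro rfl
    exact ⟨⟨by simp, by simp, rfl⟩, fun u v hu => absurd hu (Finset.notMem_empty u)⟩

lemma exists_min_of_acyclic [Fintype W] {R : W → W → Prop}
    (hirr : Irreflexive (Relation.TransGen R)) :
    ∀ X : Finset W, X.Nonempty → ∃ v ∈ X, ∀ u ∈ X, ¬ R u v := by
  intro X
  induction X using Finset.strongInduction with
  | _ X ih =>
    intro hX
    obtain ⟨v, hv⟩ := hX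
    rcases (X.filter (fun u => Relation.TransGen R u v)).eq_empty_or_nonempty with hYe | hYne
    · refine ⟨v, hv, fun u hu hR => ?_⟩
      have h : u ∈ X.filter (fun u => Relation.TransGen R u v) :=
        Finset.mem_filter.mpr ⟨hu, Relation.TransGen.single hR⟩
      rw [hYe] at h
      exact absurd h (Finset.notMem_empty u)
    · have hvY : v ∉ X.filter (fun u => Relation.TransGen R u v) :=
        fun h => hirr v (Finset.mem_filter.mp h).2
      have hss : X.filter (fun u => Relation.TransGen R u v) ⊂ X :=
        ⟨Finset.filter_subset _ _, fun h => hvY (h hv)⟩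
      obtain ⟨w, hwY, hwmin⟩ := ih _ hss hYne
      refine ⟨w, (Finset.mem_filter.mp hwY).1, fun u hu hR => ?_⟩
      have h : u ∈ X.filter (fun u => Relation.TransGen R u v) :=
        Finset.mem_filter.mpr ⟨hu, Relation.TransGen.head hR (Finset.mem_filter.mp hwY).2⟩
      exact hwmin u h hR

lemma neg_one_pow_sub {n s : ℕ} (h : s ≤ n) : ((-1 : ℤ)) ^ (n - s) = (-1) ^ n * (-1) ^ s := by
  have h1 : ((-1 : ℤ)) ^ (n - s) * (-1) ^ s = (-1) ^ n := by
    rw [← pow_add, Nat.sub_add_cancel h]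
  have h2 : ((-1 : ℤ)) ^ s * (-1) ^ s = 1 := by
    rw [← pow_add]
    exact Even.neg_one_pow ⟨s, rfl⟩
  calc ((-1 : ℤ)) ^ (n - s) = (-1) ^ (n - s) * ((-1) ^ s * (-1) ^ s) := by rw [h2, mul_one]
    _ = ((-1) ^ (n - s) * (-1) ^ s) * (-1) ^ s := by ring
    _ = (-1) ^ n * (-1) ^ s := by rw [h1]

lemma compat_finite [Fintype W] (R : W → W → Prop) (X : Finset W) :
    (compatSet R X).Finite := comps_finite X _

lemma key_sum [Fintype W] {R : W → W → Prop}
    (hmin : ∀ X : Finset W, X.Nonempty → ∃ v ∈ X, ∀ u ∈ X, ¬ R u v) (X : Finset W) :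
    ∑ᶠ C ∈ compatSet R X, ((-1 : ℤ)) ^ C.length = (-1) ^ X.card := by
  induction X using Finset.strongInduction with
  | _ X ih =>
    have hfinX : (compatSet R X).Finite := compat_finite R X
    rcases X.eq_empty_or_nonempty with rfl | hX
    · rw [compat_empty]
      simp [finsum_mem_singleton]
    · set M := X.filter (fun v => ∀ u ∈ X, ¬ R u v) with hM
      have hMne : M.Nonempty := by
        obtain ⟨v, hv, h⟩ := hmin X hX
        exact ⟨v, Finset.mem_filter.mpr ⟨hv, h⟩⟩
      have hMX : M ⊆ X := Finset.filter_subset _ _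
      have hsubM : ∀ S : Finset W, S ⊆ M ↔ (S ⊆ X ∧ ∀ v ∈ S, ∀ u ∈ X, ¬ R u v) := by
        intro S
        constructor
        · intro h
          exact ⟨fun a ha => (Finset.mem_filter.mp (h ha)).1,
            fun v hv => (Finset.mem_filter.mp (h hv)).2⟩
        · rintro ⟨h1, h2⟩ a ha
          exact Finset.mem_filter.mpr ⟨h1 ha, h2 a ha⟩
      rw [finsum_mem_eq_finite_toFinset_sum _ hfinX]
      have himg : hfinX.toFinset = ((M.powerset.erase ∅).sigma fun S =>
          (compat_finite R (X \ S)).toFinset).image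
          (fun p => p.1 :: p.2) := by
        ext C
        simp only [Set.Finite.mem_toFinset, Finset.mem_image, Finset.mem_sigma, Finset.mem_erase,
          Finset.mem_powerset]
        constructor
        · intro hC
          cases C with
          | nil =>
            exact absurd hC.1.2.2.symm (Finset.nonempty_iff_ne_empty.mp hX)
          | cons S C' =>
            obtain ⟨hSne, hSX, hminS, hC'⟩ := compat_cons_iff.mp hC
            exact ⟨⟨S, C'⟩, ⟨⟨Finset.nonempty_iff_ne_empty.mp hSne,
              (hsubM S).mpr ⟨hSX, hminS⟩⟩, hC'⟩, rfl⟩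
        · rintro ⟨⟨S, C'⟩, ⟨⟨hS0, hSM⟩, hC'⟩, rfl⟩
          obtain ⟨h1, h2⟩ := (hsubM S).mp hSM
          exact compat_cons_iff.mpr ⟨Finset.nonempty_iff_ne_empty.mpr hS0, h1, h2, hC'⟩
      rw [himg, Finset.sum_image ?hinj]
      case hinj =>
        rintro ⟨S, C⟩ - ⟨S', C'⟩ - h
        simp only [List.cons.injEq] at h
        simp [h.1, h.2]
      rw [Finset.sum_sigma]
      have hterm : ∀ S ∈ M.powerset.erase ∅,
          (∑ C' ∈ (compat_finite R (X \ S)).toFinset,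
            ((-1 : ℤ)) ^ (S :: C').length) = -((-1) ^ X.card * (-1) ^ S.card) := by
        intro S hS
        obtain ⟨hS0, hSM⟩ := by
          rw [Finset.mem_erase, Finset.mem_powerset] at hS; exact hS
        have hSX : S ⊆ X := hSM.trans hMX
        have hlt : X \ S ⊂ X :=
          Finset.sdiff_ssubset hSX (Finset.nonempty_iff_ne_empty.mpr hS0)
        have hIH := ih (X \ S) hlt
        rw [finsum_mem_eq_finite_toFinset_sum _ (compat_finite R (X \ S))] at hIH
        have hcardle : S.card ≤ X.card := Finset.card_le_card hSX
        calc (∑ C' ∈ (compat_finite R (X \ S)).toFinset, ((-1 : ℤ)) ^ (S :: C').length)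
            = ∑ C' ∈ (compat_finite R (X \ S)).toFinset, ((-1 : ℤ)) ^ C'.length * (-1) := by
              apply Finset.sum_congr rfl
              intro C' _
              rw [List.length_cons, pow_succ]
          _ = ((-1 : ℤ)) ^ (X \ S).card * (-1) := by rw [← Finset.sum_mul, hIH]
          _ = -((-1) ^ X.card * (-1) ^ S.card) := by
              rw [Finset.card_sdiff_of_subset hSX, neg_one_pow_sub hcardle]; ring
      rw [Finset.sum_congr rfl hterm]
      have hpows : ∑ S ∈ M.powerset.erase ∅, ((-1 : ℤ)) ^ S.card = -1 := by
        have h1 : ∑ S ∈ M.powerset, ((-1 : ℤ)) ^ S.card = 0 :=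
          Finset.sum_powerset_neg_one_pow_card_of_nonempty hMne
        have h2 : (∅ : Finset W) ∈ M.powerset := Finset.empty_mem_powerset M
        have h3 := Finset.add_sum_erase _ (fun S => ((-1 : ℤ)) ^ S.card) h2
        rw [h1] at h3
        simp only [Finset.card_empty, pow_zero] at h3
        linarith
      calc (∑ S ∈ M.powerset.erase ∅, -(((-1 : ℤ)) ^ X.card * (-1) ^ S.card))
          = -(((-1 : ℤ)) ^ X.card * ∑ S ∈ M.powerset.erase ∅, ((-1 : ℤ)) ^ S.card) := by
            rw [Finset.mul_sum, ← Finset.sum_neg_distrib]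
        _ = (-1) ^ X.card := by rw [hpows]; ring

end Helpers

section PartB
variable {W : Type*} [DecidableEq W] [Fintype W]

def stableSet (Q : SimpleGraph W) : Set (List (Finset W)) :=
  {C | IsComposition Finset.univ C ∧ ∀ B ∈ C, ∀ u ∈ B, ∀ v ∈ B, ¬ Q.Adj u v}

lemma stable_finite (Q : SimpleGraph W) : (stableSet Q).Finite := comps_finite _ _

def oc (Q : SimpleGraph W) (C : List (Finset W)) : W → W → Prop :=
  fun u v => Q.Adj u v ∧ earlier C u v

lemma mem_get_of_comp {X : Finset W} {C : List (Finset W)} (h : IsComposition X C)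
    {u : W} (hu : u ∈ X) : ∃ i : Fin C.length, u ∈ C.get i := by
  have : u ∈ C.foldr (· ∪ ·) ∅ := by rw [h.2.2]; exact hu
  obtain ⟨B, hB, hm⟩ := mem_foldr_union.mp this
  obtain ⟨i, rfl⟩ := List.mem_iff_get.mp hB
  exact ⟨i, hm⟩

lemma oc_acyclic {Q : SimpleGraph W} {C : List (Finset W)} (hC : C ∈ stableSet Q) :
    IsAcyclicOrientationOn Q Set.univ (oc Q C) := by
  obtain ⟨hcomp, hst⟩ := hC
  have hpd := hcomp.2.1
  constructor
  · refine ⟨fun u v h => ⟨trivial, trivial, h.1⟩, ?_, ?_⟩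
    · intro u v _ _ hadj
      obtain ⟨i, hi⟩ := mem_get_of_comp hcomp (Finset.mem_univ u)
      obtain ⟨j, hj⟩ := mem_get_of_comp hcomp (Finset.mem_univ v)
      rcases lt_trichotomy i j with h | h | h
      · exact Or.inl ⟨hadj, i, j, h, hi, hj⟩
      · subst h
        exact absurd hadj (hst (C.get i) (C.get_mem _) u hi v hj)
      · exact Or.inr ⟨hadj.symm, j, i, h, hj, hi⟩
    · rintro u v ⟨⟨-, i, j, hij, hui, hvj⟩, ⟨-, i', j', hij', hvi', huj'⟩⟩
      have h1 := idx_unique hpd hui huj'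
      have h2 := idx_unique hpd hvj hvi'
      subst h1; subst h2
      exact absurd (hij.trans hij') (lt_irrefl _)
  · have hsub : ∀ u v, Relation.TransGen (oc Q C) u v → earlier C u v := by
      intro u v h
      induction h with
      | single h => exact h.2
      | tail _ h2 ih =>
        obtain ⟨i, j, hij, hui, hbj⟩ := ih
        obtain ⟨j₁, k, hjk, hbj₁, hvk⟩ := h2.2
        have he := idx_unique hpd hbj hbj₁
        exact ⟨i, k, lt_trans (he ▸ hij) hjk, hui, hvk⟩
    intro u hu
    obtain ⟨i, j, hij, hui, huj⟩ := hsub u u hu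
    exact absurd (idx_unique hpd hui huj) (ne_of_lt hij)

lemma fiber_eq {Q : SimpleGraph W} {O : W → W → Prop}
    (hO : IsAcyclicOrientationOn Q Set.univ O) :
    {C | C ∈ stableSet Q ∧ oc Q C = O} = compatSet O Finset.univ := by
  obtain ⟨⟨h1, h2, h3⟩, _⟩ := hO
  ext C
  simp only [Set.mem_setOf_eq, compatSet]
  constructor
  · rintro ⟨⟨hcomp, hst⟩, rfl⟩
    exact ⟨hcomp, fun u v _ _ h => h.2⟩
  · rintro ⟨hcomp, hear⟩
    have hear' : ∀ u v, O u v → earlier C u v := fun u v h =>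
      hear u v (Finset.mem_univ u) (Finset.mem_univ v) h
    have hpd := hcomp.2.1
    have hnoear : ∀ (u v : W) (k : Fin C.length), u ∈ C.get k → v ∈ C.get k →
        ¬ earlier C u v := by
      rintro u v k hu hv ⟨i, j, hij, hui, hvj⟩
      have h1' := idx_unique hpd hui hu
      have h2' := idx_unique hpd hvj hv
      subst h1'; subst h2'
      exact absurd hij (lt_irrefl _)
    have hstab : ∀ B ∈ C, ∀ u ∈ B, ∀ v ∈ B, ¬ Q.Adj u v := by
      intro B hB u hu v hv hadj
      obtain ⟨k, rfl⟩ := List.mem_iff_get.mp hB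
      rcases h2 u v trivial trivial hadj with h | h
      · exact hnoear u v k hu hv (hear' _ _ h)
      · exact hnoear v u k hv hu (hear' _ _ h)
    refine ⟨⟨hcomp, hstab⟩, ?_⟩
    funext u v
    apply propext
    constructor
    · rintro ⟨hadj, heuv⟩
      rcases h2 u v trivial trivial hadj with h | h
      · exact h
      · exfalso
        obtain ⟨i, j, hij, hui, hvj⟩ := heuv
        obtain ⟨i', j', hij', hvi', huj'⟩ := hear' _ _ h
        have e1 := idx_unique hpd hui huj'
        have e2 := idx_unique hpd hvj hvi'
        subst e1; subst e2
        exact absurd (hij.trans hij') (lt_irrefl _)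
    · intro h
      exact ⟨(h1 u v h).2.2, hear' _ _ h⟩

lemma partB (Q : SimpleGraph W)
    (hfinO : {O : W → W → Prop | IsAcyclicOrientationOn Q Set.univ O}.Finite) :
    ∑ᶠ C ∈ stableSet Q, ((-1 : ℤ)) ^ C.length
      = (-1) ^ (Fintype.card W) * (hfinO.toFinset.card : ℤ) := by
  have hfinS : (stableSet Q).Finite := stable_finite Q
  rw [finsum_mem_eq_finite_toFinset_sum _ hfinS]
  rw [← Finset.sum_fiberwise_of_maps_to (g := oc Q) (t := hfinO.toFinset)
    (fun C hC => (Set.Finite.mem_toFinset _).mpr (oc_acyclic ((Set.Finite.mem_toFinset _).mp hC)))]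
  have hinner : ∀ O ∈ hfinO.toFinset,
      (∑ C ∈ hfinS.toFinset.filter (fun C => oc Q C = O), ((-1 : ℤ)) ^ C.length)
        = (-1) ^ (Fintype.card W) := by
    intro O hO
    have hO' := (Set.Finite.mem_toFinset _).mp hO
    have hset : hfinS.toFinset.filter (fun C => oc Q C = O)
        = (compat_finite O Finset.univ).toFinset := by
      ext C
      simp only [Finset.mem_filter, Set.Finite.mem_toFinset]
      exact Set.ext_iff.mp (fiber_eq hO') C
    rw [hset]
    have hmin := exists_min_of_acyclic hO'.2
    have hkey := key_sum hmin Finset.univ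
    rw [finsum_mem_eq_finite_toFinset_sum _ (compat_finite O Finset.univ)] at hkey
    rw [hkey, Finset.card_univ]
  rw [Finset.sum_congr rfl hinner, Finset.sum_const, nsmul_eq_mul]
  ring

end PartB
section PartA
variable {V : Type*} [Fintype V] [DecidableEq V]

lemma partA (G : SimpleGraph V) (F H : Set (Sym2 V))
    (hF : IsFlatOn G Set.univ F) (hH : IsFlatOn G Set.univ H) (hHF : H ⊆ F)
    [Fintype (SimpleGraph.fromEdgeSet H).ConnectedComponent]
    [DecidableEq (SimpleGraph.fromEdgeSet H).ConnectedComponent] :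
    ∑ᶠ C ∈ {C : List (Finset V) | IsComposition Finset.univ C ∧
        {e : Sym2 V | ∃ B ∈ C, e ∈ edgeRestrict F ↑B} = H},
        ((-1 : ℤ)) ^ C.length
      = ∑ᶠ D ∈ stableSet (contractionGraph H F), ((-1 : ℤ)) ^ D.length := by
  set mk := (SimpleGraph.fromEdgeSet H).connectedComponentMk with hmk
  have sub1 : ∀ (C : List (Finset V)), IsComposition Finset.univ C →
      ({e : Sym2 V | ∃ B ∈ C, e ∈ edgeRestrict F ↑B} = H) →
      ∀ u v, (SimpleGraph.fromEdgeSet H).Reachable u v →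
      ∀ i : Fin C.length, u ∈ C.get i → v ∈ C.get i := by
    intro C hcomp hedge u v huv
    obtain ⟨p⟩ := huv
    induction p with
    | nil => exact fun i h => h
    | @cons u b v hadj p ih =>
      intro i hui
      have he : s(u, b) ∈ H := ((SimpleGraph.fromEdgeSet_adj _).mp hadj).1
      rw [← hedge] at he
      obtain ⟨B, hB, hFe, hvert⟩ := he
      have huB : u ∈ B := hvert u (Sym2.mem_mk_left u b)
      have hbB : b ∈ B := hvert b (Sym2.mem_mk_right u b)
      obtain ⟨k, rfl⟩ := List.mem_iff_get.mp hB
      have hik : i = k := idx_unique hcomp.2.1 hui huB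
      exact ih i (by rw [hik]; exact hbB)
  have sub2 : ∀ (C : List (Finset V)), ({e : Sym2 V | ∃ B ∈ C, e ∈ edgeRestrict F ↑B} = H) →
      ∀ e, (∃ B ∈ C, e ∈ edgeRestrict F ↑B) → e ∈ H := by
    intro C hedge e he
    rw [← hedge]; exact he
  have hfin1 : {C : List (Finset V) | IsComposition Finset.univ C ∧
      {e : Sym2 V | ∃ B ∈ C, e ∈ edgeRestrict F ↑B} = H}.Finite := comps_finite _ _
  have hfin2 : (stableSet (contractionGraph H F)).Finite := stable_finite _
  rw [finsum_mem_eq_finite_toFinset_sum _ hfin1, finsum_mem_eq_finite_toFinset_sum _ hfin2]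
  refine Finset.sum_bij' (i := fun C _ => C.map (fun B => B.image mk))
    (j := fun D _ => D.map (fun Bl => Finset.univ.filter (fun v => mk v ∈ Bl)))
    ?_ ?_ ?_ ?_ ?_
  · -- maps into stable compositions
    intro C hC
    obtain ⟨hcomp, hedge⟩ := (Set.Finite.mem_toFinset _).mp hC
    have hpd := hcomp.2.1
    refine (Set.Finite.mem_toFinset _).mpr ⟨⟨?_, ?_, ?_⟩, ?_⟩
    · rintro Bl hBl
      obtain ⟨B, hB, rfl⟩ := List.mem_map.mp hBl
      exact (hcomp.1 B hB).image mk
    · rw [List.pairwise_iff_get]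
      intro i j hij
      have hi' : i.val < C.length := by simpa using i.isLt
      have hj' : j.val < C.length := by simpa using j.isLt
      rw [List.get_eq_getElem, List.get_eq_getElem, List.getElem_map, List.getElem_map]
      apply Finset.disjoint_left.mpr
      intro x hx hx'
      obtain ⟨a, haB, hax⟩ := Finset.mem_image.mp hx
      obtain ⟨a', haB', hax'⟩ := Finset.mem_image.mp hx'
      have hre : (SimpleGraph.fromEdgeSet H).Reachable a a' :=
        SimpleGraph.ConnectedComponent.eq.mp (hax.trans hax'.symm)
      have h1 : a' ∈ C.get ⟨i.val, hi'⟩ := sub1 C hcomp hedge a a' hre ⟨i.val, hi'⟩ haB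
      have h2 := idx_unique hpd h1 (haB' : a' ∈ C.get ⟨j.val, hj'⟩)
      rw [Fin.mk_eq_mk] at h2
      have : i.val < j.val := hij
      omega
    · ext x
      rw [mem_foldr_union]
      simp only [Finset.mem_univ, iff_true]
      obtain ⟨a, ha0⟩ := x.exists_rep
      have ha : mk a = x := ha0
      have : a ∈ C.foldr (· ∪ ·) ∅ := by rw [hcomp.2.2]; exact Finset.mem_univ a
      obtain ⟨B, hB, haB⟩ := mem_foldr_union.mp this
      exact ⟨B.image mk, List.mem_map_of_mem hB, Finset.mem_image.mpr ⟨a, haB, ha⟩⟩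
    · intro Bl hBl x hx y hy hadj
      obtain ⟨B, hB, rfl⟩ := List.mem_map.mp hBl
      obtain ⟨hne, u, v, huvF, hux, hvy⟩ := hadj
      obtain ⟨a, haB, hax⟩ := Finset.mem_image.mp hx
      obtain ⟨a', haB', hay⟩ := Finset.mem_image.mp hy
      obtain ⟨k, rfl⟩ := List.mem_iff_get.mp hB
      have hu : u ∈ C.get k := sub1 C hcomp hedge a u
        (SimpleGraph.ConnectedComponent.eq.mp (hax.trans hux.symm)) k haB
      have hv : v ∈ C.get k := sub1 C hcomp hedge a' v
        (SimpleGraph.ConnectedComponent.eq.mp (hay.trans hvy.symm)) k haB'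
      have hH' : s(u, v) ∈ H := by
        refine sub2 C hedge _ ⟨C.get k, List.get_mem C _, huvF, ?_⟩
        intro w hw
        rcases Sym2.mem_iff.mp hw with rfl | rfl
        exacts [hu, hv]
      have hmkuv : mk u = mk v := by
        by_cases huv : u = v
        · rw [huv]
        · exact SimpleGraph.ConnectedComponent.eq.mpr
            (SimpleGraph.Adj.reachable ((SimpleGraph.fromEdgeSet_adj _).mpr ⟨hH', huv⟩))
      exact hne (by rw [← hux, ← hvy]; exact hmkuv)
  · -- reverse map into compositions with edge condition
    intro D hD
    obtain ⟨⟨hne, hpd, hun⟩, hst⟩ := (Set.Finite.mem_toFinset _).mp hD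
    refine (Set.Finite.mem_toFinset _).mpr ⟨⟨?_, ?_, ?_⟩, ?_⟩
    · rintro B hB
      obtain ⟨Bl, hBl, rfl⟩ := List.mem_map.mp hB
      obtain ⟨x, hx⟩ := hne Bl hBl
      obtain ⟨v, hv0⟩ := x.exists_rep
      have hv : mk v = x := hv0
      exact ⟨v, Finset.mem_filter.mpr ⟨Finset.mem_univ v, by rw [hv]; exact hx⟩⟩
    · rw [List.pairwise_map]
      refine hpd.imp ?_
      intro Bl Bl' hdisj
      apply Finset.disjoint_left.mpr
      intro v hvB hvB'
      exact Finset.disjoint_left.mp hdisj (Finset.mem_filter.mp hvB).2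
        (Finset.mem_filter.mp hvB').2
    · ext v
      rw [mem_foldr_union]
      simp only [Finset.mem_univ, iff_true]
      have h0 : mk v ∈ D.foldr (· ∪ ·) ∅ := by rw [hun]; exact Finset.mem_univ _
      obtain ⟨Bl, hBl, h⟩ := mem_foldr_union.mp h0
      exact ⟨_, List.mem_map_of_mem hBl, Finset.mem_filter.mpr ⟨Finset.mem_univ v, h⟩⟩
    · apply Set.eq_of_subset_of_subset
      · rintro e ⟨B, hB, hFe, hvert⟩
        induction e using Sym2.ind with
        | _ u v =>
          obtain ⟨Bl, hBl, rfl⟩ := List.mem_map.mp hB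
          have hu : mk u ∈ Bl := (Finset.mem_filter.mp (hvert u (Sym2.mem_mk_left _ _))).2
          have hv' : mk v ∈ Bl := (Finset.mem_filter.mp (hvert v (Sym2.mem_mk_right _ _))).2
          have hadj : G.Adj u v := (SimpleGraph.mem_edgeSet _).mp (hF.1 hFe)
          by_cases hmkuv : mk u = mk v
          · exact hH.2.2 u v trivial trivial hadj (SimpleGraph.ConnectedComponent.eq.mp hmkuv)
          · exact absurd ⟨hmkuv, u, v, hFe, rfl, rfl⟩
              (hst Bl hBl (mk u) hu (mk v) hv')
      · intro e he
        induction e using Sym2.ind with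
        | _ u v =>
          have hadj : G.Adj u v := (SimpleGraph.mem_edgeSet _).mp (hH.1 he)
          have hne' : u ≠ v := hadj.ne
          have hmkuv : mk u = mk v := SimpleGraph.ConnectedComponent.eq.mpr
            (SimpleGraph.Adj.reachable ((SimpleGraph.fromEdgeSet_adj _).mpr ⟨he, hne'⟩))
          have h0 : mk u ∈ D.foldr (· ∪ ·) ∅ := by rw [hun]; exact Finset.mem_univ _
          obtain ⟨Bl, hBl, hu⟩ := mem_foldr_union.mp h0
          refine ⟨Finset.univ.filter (fun w => mk w ∈ Bl), List.mem_map_of_mem hBl,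
            hHF he, ?_⟩
          intro w hw
          rcases Sym2.mem_iff.mp hw with rfl | rfl
          · exact Finset.mem_filter.mpr ⟨Finset.mem_univ _, hu⟩
          · exact Finset.mem_filter.mpr ⟨Finset.mem_univ _, by rw [← hmkuv]; exact hu⟩
  · -- left inverse
    intro C hC
    obtain ⟨hcomp, hedge⟩ := (Set.Finite.mem_toFinset _).mp hC
    show List.map _ (List.map _ C) = C
    rw [List.map_map]
    have hblk : ∀ B ∈ C, (Finset.univ.filter (fun v => mk v ∈ B.image mk)) = B := by
      intro B hB
      ext v
      simp only [Finset.mem_filter, Finset.mem_univ, true_and, Finset.mem_image]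
      constructor
      · rintro ⟨a, haB, hav⟩
        obtain ⟨k, rfl⟩ := List.mem_iff_get.mp hB
        exact sub1 C hcomp hedge a v (SimpleGraph.ConnectedComponent.eq.mp hav) k haB
      · intro hv
        exact ⟨v, hv, rfl⟩
    exact (List.map_congr_left (fun B hB => hblk B hB)).trans (List.map_id C)
  · -- right inverse
    intro D _
    show List.map _ (List.map _ D) = D
    rw [List.map_map]
    have hblk : ∀ Bl : Finset (SimpleGraph.fromEdgeSet H).ConnectedComponent,
        ((Finset.univ.filter (fun v => mk v ∈ Bl)).image mk) = Bl := by
      intro Bl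
      ext x
      simp only [Finset.mem_image, Finset.mem_filter, Finset.mem_univ, true_and]
      constructor
      · rintro ⟨v, hv, rfl⟩
        exact hv
      · intro hx
        obtain ⟨v, hv0⟩ := x.exists_rep
        have hv : mk v = x := hv0
        exact ⟨v, by rw [hv]; exact hx, hv⟩
    exact (List.map_congr_left (fun Bl _ => hblk Bl)).trans (List.map_id D)
  · intro C _
    rw [List.length_map]

end PartA

theorem antipode_of_flats {V : Type*} [Fintype V] [DecidableEq V] [Nonempty V]
    (G : SimpleGraph V) (F H : Set (Sym2 V))
    (hF : IsFlatOn G Set.univ F) (hH : IsFlatOn G Set.univ H) (hHF : H ⊆ F) :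
    ∑ᶠ C ∈ {C : List (Finset V) | IsComposition Finset.univ C ∧
        {e : Sym2 V | ∃ B ∈ C, e ∈ edgeRestrict F ↑B} = H},
        ((-1 : ℤ)) ^ C.length =
      (-1 : ℤ) ^ (Nat.card (SimpleGraph.fromEdgeSet H).ConnectedComponent) *
        (Nat.card {O : (SimpleGraph.fromEdgeSet H).ConnectedComponent →
            (SimpleGraph.fromEdgeSet H).ConnectedComponent → Prop //
            IsAcyclicOrientationOn (contractionGraph H F) Set.univ O} : ℤ) := by
  letI : Fintype (SimpleGraph.fromEdgeSet H).ConnectedComponent := Fintype.ofFinite _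
  letI : DecidableEq (SimpleGraph.fromEdgeSet H).ConnectedComponent := Classical.decEq _
  have hfinO : {O : (SimpleGraph.fromEdgeSet H).ConnectedComponent →
      (SimpleGraph.fromEdgeSet H).ConnectedComponent → Prop |
      IsAcyclicOrientationOn (contractionGraph H F) Set.univ O}.Finite := Set.toFinite _
  rw [partA G F H hF hH hHF, partB (contractionGraph H F) hfinO]
  congr 1
  · rw [Nat.card_eq_fintype_card]
  · norm_cast
    rw [← Set.ncard_eq_toFinset_card _ hfinO, ← Nat.card_coe_set_eq]
    rfl


end GraphSpecies
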